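/- (Equivalence between Blackburn compatibility and lifting) Let P_*, P_0, …, P_{g−1} be n×n PDAs, and let P_*^{(i,j)} for i ≠ j be copies of P_* whose integer sets are pairwise disjoint and disjoint from the integers of all P_k. Form the gn×gn block array L with P_i as the i-th diagonal block and P_*^{(i,j)} as the (i,j) off-diagonal block. Then L is a valid PDA if and only if {P_0, …, P_{g−1}} is pairwise Blackburn-compatible with respect to P_*. -/

import Mathlib

open Finset

/-- Number of stars (`none`) in column `k` of the array `P`. -/
def colStars {f K : ℕ} (P : Fin f → Fin K → Option ℕ) (k : Fin K) : ℕ :=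
  (Finset.univ.filter fun j => P j k = none).card

/-- `P` is a `(K, f, Z, S)` placement delivery array: an `f × K` array over `{∗} ∪ S`
(`none` encodes `∗`) with exactly `Z` stars in each column, every integer of `S`
occurring at least once (and all integer entries lying in `S`), satisfying the
Blackburn property. -/
def IsPDA {f K : ℕ} (P : Fin f → Fin K → Option ℕ) (Z : ℕ) (S : Finset ℕ) : Prop :=
  (∀ k, colStars P k = Z) ∧
  (∀ s ∈ S, ∃ j k, P j k = some s) ∧
  (∀ j k s, P j k = some s → s ∈ S) ∧
  (∀ j₁ k₁ j₂ k₂ s, (j₁, k₁) ≠ (j₂, k₂) →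
    P j₁ k₁ = some s → P j₂ k₂ = some s → P j₁ k₂ = none ∧ P j₂ k₁ = none)

/-- Every integer of `S` appears exactly `g` times in the array `P`. -/
def IsRegularPDA {f K : ℕ} (P : Fin f → Fin K → Option ℕ) (S : Finset ℕ) (g : ℕ) : Prop :=
  ∀ s ∈ S, ((Finset.univ : Finset (Fin f × Fin K)).filter
    (fun jk => P jk.1 jk.2 = some s)).card = g

/-- `P₀` and `P₁` are Blackburn-compatible with respect to `Pstar`. -/
def BBCompat {n m : ℕ} (P₀ P₁ Pstar : Fin n → Fin m → Option ℕ) : Prop :=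
  ∀ i₀ j₀ i₁ j₁ s, P₀ i₀ j₀ = some s → P₁ i₁ j₁ = some s →
    Pstar i₀ j₁ = none ∧ Pstar i₁ j₀ = none

/-- `Ig n t` is the `n × n` array with the integer `t` on the main diagonal and `∗`
elsewhere. -/
def Ig (n t : ℕ) : Fin n → Fin n → Option ℕ := fun i j => if i = j then some t else none

/-- Block-row index of a global index for an array built from `a × a` grids of `b`-sized
blocks. -/
def blkIdx {a b : ℕ} (j : Fin (a * b)) : Fin a :=
  ⟨(j : ℕ) / b, Nat.div_lt_of_lt_mul (Nat.mul_comm a b ▸ j.isLt)⟩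

/-- Within-block index of a global index. -/
def inIdx {a b : ℕ} (j : Fin (a * b)) : Fin b :=
  ⟨(j : ℕ) % b, Nat.mod_lt _ (by
    rcases Nat.eq_zero_or_pos b with h | h
    · exact absurd j.isLt (by simp [h])
    · exact h)⟩

/-- **Equivalence between Blackburn compatibility and lifting.**
Let `P 0, …, P (g−1)` be `(n, n, Zc, Sc i)` PDAs and `Pstar` an `(n, n, Zs, Ss)` PDA, and
let the `(i,j)` off-diagonal blocks of the `gn × gn` block array `L` be integer-disjoint
copies of `Pstar` (relabeled by `φ i j`, with all copy integer sets pairwise disjoint and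
disjoint from the `Sc k`), while the `i`-th diagonal block is `P i`. Then `L` is a valid
PDA (with `Zc + (g−1)Zs` stars per column and the union of all integer sets) if and only
if `{P 0, …, P (g−1)}` is pairwise Blackburn-compatible with respect to `Pstar`. -/
def emb {a b : ℕ} (i : Fin a) (t : Fin b) : Fin (a * b) :=
  ⟨b * i + t, by
    have h1 : (i : ℕ) + 1 ≤ a := i.isLt
    calc b * i + t < b * (i + 1) := by rw [Nat.mul_succ]; omega
      _ ≤ b * a := Nat.mul_le_mul_left b h1
      _ = a * b := Nat.mul_comm b a⟩

lemma blk_emb {a b : ℕ} (i : Fin a) (t : Fin b) : blkIdx (emb i t) = i := by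
  have hb : 0 < b := t.pos
  apply Fin.ext
  simp [blkIdx, emb, Nat.mul_add_div hb, Nat.div_eq_of_lt t.isLt]

lemma in_emb {a b : ℕ} (i : Fin a) (t : Fin b) : inIdx (emb i t) = t := by
  apply Fin.ext
  simp [inIdx, emb, Nat.mul_add_mod, Nat.mod_eq_of_lt t.isLt]

lemma emb_blk_in {a b : ℕ} (x : Fin (a * b)) : emb (blkIdx x) (inIdx x) = x := by
  apply Fin.ext
  simp [emb, blkIdx, inIdx, Nat.div_add_mod]

lemma fin_eq_of_blk_in {a b : ℕ} {x y : Fin (a * b)} (h1 : blkIdx x = blkIdx y)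
    (h2 : inIdx x = inIdx y) : x = y := by
  rw [← emb_blk_in x, h1, h2, emb_blk_in]

lemma card_filter_mul {a b : ℕ} (R : Fin (a * b) → Prop) [DecidablePred R] :
    (univ.filter R).card = ∑ i : Fin a, ((univ : Finset (Fin b)).filter fun t => R (emb i t)).card := by
    rw [Finset.card_eq_sum_card_fiberwise (f := fun x => blkIdx x) (t := univ) (fun x _ => mem_univ _)]
    refine Finset.sum_congr rfl fun i _ => ?_
    apply Finset.card_bij (fun x _ => inIdx x)
    · intro x hx
      simp only [mem_filter, mem_univ, true_and] at hx ⊢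
      rw [← hx.2, emb_blk_in]; exact hx.1
    · intro x₁ h₁ x₂ h₂ he
      simp only [mem_filter, mem_univ, true_and] at h₁ h₂
      exact fin_eq_of_blk_in (h₁.2.trans h₂.2.symm) he
    · intro t ht
      simp only [mem_filter, mem_univ, true_and] at ht
      exact ⟨emb i t, by simp [mem_filter, blk_emb, ht], in_emb i t⟩

theorem stmt_8 {n g Zc Zs : ℕ} (Sc : Fin g → Finset ℕ) (Ss : Finset ℕ)
    (P : Fin g → Fin n → Fin n → Option ℕ)
    (Pstar : Fin n → Fin n → Option ℕ)
    (hP : ∀ i, IsPDA (P i) Zc (Sc i))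
    (hstar : IsPDA Pstar Zs Ss)
    (φ : Fin g → Fin g → ℕ → ℕ)
    (hinj : ∀ i j, Set.InjOn (φ i j) ↑Ss)
    (hφdisj : ∀ i j i' j' : Fin g, (i, j) ≠ (i', j') →
      Disjoint (Ss.image (φ i j)) (Ss.image (φ i' j')))
    (hφP : ∀ i j k, Disjoint (Ss.image (φ i j)) (Sc k)) :
    IsPDA
      (fun x y : Fin (g * n) =>
        if blkIdx x = blkIdx y then P (blkIdx x) (inIdx x) (inIdx y)
        else (Pstar (inIdx x) (inIdx y)).map (φ (blkIdx x) (blkIdx y)))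
      (Zc + (g - 1) * Zs)
      ((Finset.univ.biUnion Sc) ∪
        (((Finset.univ : Finset (Fin g × Fin g)).filter fun p => p.1 ≠ p.2).biUnion
          fun p => Ss.image (φ p.1 p.2)))
    ↔ (∀ i i' : Fin g, i ≠ i' → BBCompat (P i) (P i') Pstar) := by
  constructor
  · rintro ⟨-, -, -, hBB⟩ i i' hii a b c d s h1 h2
    have hne : ((emb i a, emb i b) : Fin (g*n) × Fin (g*n)) ≠ (emb i' c, emb i' d) := by
      intro h
      exact hii (by simpa [blk_emb] using congrArg (fun p => blkIdx p.1) h)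
    have hx := hBB (emb i a) (emb i b) (emb i' c) (emb i' d) s hne
      (by simp [blk_emb, in_emb, h1]) (by simp [blk_emb, in_emb, h2])
    simp only [blk_emb, in_emb, if_neg hii, if_neg (Ne.symm hii),
      Option.map_eq_none_iff] at hx
    exact hx
  · intro hC
    refine ⟨?_, ?_, ?_, ?_⟩
    · -- column star counts
      intro y
      unfold colStars
      rw [card_filter_mul]
      have hsum : ∀ i : Fin g, ((univ : Finset (Fin n)).filter fun t =>
          (fun x y : Fin (g*n) =>
            if blkIdx x = blkIdx y then P (blkIdx x) (inIdx x) (inIdx y)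
            else (Pstar (inIdx x) (inIdx y)).map (φ (blkIdx x) (blkIdx y)))
            (emb i t) y = none).card = if i = blkIdx y then Zc else Zs := by
        intro i
        by_cases hi : i = blkIdx y
        · simp only [blk_emb, in_emb, if_pos hi, hi]
          exact (hP (blkIdx y)).1 (inIdx y)
        · simp only [blk_emb, in_emb, if_neg hi, Option.map_eq_none_iff]
          exact hstar.1 (inIdx y)
      rw [Finset.sum_congr rfl fun i _ => hsum i]
      rw [← Finset.add_sum_erase _ _ (mem_univ (blkIdx y)), if_pos rfl]
      congr 1
      rw [Finset.sum_congr rfl (fun i hi => if_neg (Finset.mem_erase.1 hi).1),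
        Finset.sum_const, Finset.card_erase_of_mem (mem_univ _), Finset.card_univ,
        Fintype.card_fin, smul_eq_mul]
    · -- every symbol occurs
      intro s hs
      rcases Finset.mem_union.1 hs with hs | hs
      · obtain ⟨i, -, hsi⟩ := Finset.mem_biUnion.1 hs
        obtain ⟨a, b, hab⟩ := (hP i).2.1 s hsi
        exact ⟨emb i a, emb i b, by simp [blk_emb, in_emb, hab]⟩
      · obtain ⟨p, hp, hsp⟩ := Finset.mem_biUnion.1 hs
        have hpne : p.1 ≠ p.2 := (Finset.mem_filter.1 hp).2
        obtain ⟨t, ht, rfl⟩ := Finset.mem_image.1 hsp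
        obtain ⟨a, b, hab⟩ := hstar.2.1 t ht
        exact ⟨emb p.1 a, emb p.2 b, by simp [blk_emb, in_emb, if_neg hpne, hab]⟩
    · -- all entries lie in the symbol set
      intro x y s h
      simp only at h
      by_cases hb : blkIdx x = blkIdx y
      · rw [if_pos hb] at h
        exact Finset.mem_union.2 (Or.inl (Finset.mem_biUnion.2
          ⟨blkIdx x, mem_univ _, (hP _).2.2.1 _ _ _ h⟩))
      · rw [if_neg hb] at h
        obtain ⟨t, ht, hts⟩ := Option.map_eq_some_iff.1 h
        refine Finset.mem_union.2 (Or.inr (Finset.mem_biUnion.2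
          ⟨(blkIdx x, blkIdx y), Finset.mem_filter.2 ⟨mem_univ _, hb⟩, ?_⟩))
        exact Finset.mem_image.2 ⟨t, hstar.2.2.1 _ _ _ ht, hts⟩
    · -- Blackburn property
      intro x₁ y₁ x₂ y₂ s hne h1 h2
      simp only at h1 h2 ⊢
      by_cases d1 : blkIdx x₁ = blkIdx y₁ <;> by_cases d2 : blkIdx x₂ = blkIdx y₂
      · rw [if_pos d1] at h1
        rw [if_pos d2] at h2
        by_cases hb : blkIdx x₁ = blkIdx x₂
        · have hbp : ((inIdx x₁, inIdx y₁) : Fin n × Fin n) ≠ (inIdx x₂, inIdx y₂) := by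
            intro he
            apply hne
            have hx : x₁ = x₂ := fin_eq_of_blk_in hb (congrArg Prod.fst he)
            have hy : y₁ = y₂ := fin_eq_of_blk_in (d1.symm.trans (hb.trans d2))
              (congrArg Prod.snd he)
            rw [hx, hy]
          rw [← hb] at h2
          obtain ⟨e1, e2⟩ := (hP (blkIdx x₁)).2.2.2 _ _ _ _ s hbp h1 h2
          refine ⟨?_, ?_⟩
          · rw [if_pos (hb.trans d2)]; exact e1
          · rw [if_pos ((hb.symm).trans d1), ← hb]; exact e2
        · obtain ⟨e1, e2⟩ := hC (blkIdx x₁) (blkIdx x₂) hb (inIdx x₁) (inIdx y₁)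
            (inIdx x₂) (inIdx y₂) s h1 h2
          have n1 : blkIdx x₁ ≠ blkIdx y₂ := fun h => hb (h.trans d2.symm)
          have n2 : blkIdx x₂ ≠ blkIdx y₁ := fun h => hb ((h.trans d1.symm).symm)
          exact ⟨by rw [if_neg n1, e1]; rfl, by rw [if_neg n2, e2]; rfl⟩
      · rw [if_pos d1] at h1
        rw [if_neg d2] at h2
        obtain ⟨t, ht, hts⟩ := Option.map_eq_some_iff.1 h2
        exact absurd ((hP _).2.2.1 _ _ _ h1)
          (Finset.disjoint_left.1 (hφP (blkIdx x₂) (blkIdx y₂) (blkIdx x₁))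
            (Finset.mem_image.2 ⟨t, hstar.2.2.1 _ _ _ ht, hts⟩))
      · rw [if_neg d1] at h1
        rw [if_pos d2] at h2
        obtain ⟨t, ht, hts⟩ := Option.map_eq_some_iff.1 h1
        exact absurd ((hP _).2.2.1 _ _ _ h2)
          (Finset.disjoint_left.1 (hφP (blkIdx x₁) (blkIdx y₁) (blkIdx x₂))
            (Finset.mem_image.2 ⟨t, hstar.2.2.1 _ _ _ ht, hts⟩))
      · rw [if_neg d1] at h1
        rw [if_neg d2] at h2
        obtain ⟨t₁, ht₁, hts₁⟩ := Option.map_eq_some_iff.1 h1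
        obtain ⟨t₂, ht₂, hts₂⟩ := Option.map_eq_some_iff.1 h2
        have m₁ : t₁ ∈ Ss := hstar.2.2.1 _ _ _ ht₁
        have m₂ : t₂ ∈ Ss := hstar.2.2.1 _ _ _ ht₂
        have hpe : ((blkIdx x₁, blkIdx y₁) : Fin g × Fin g) = (blkIdx x₂, blkIdx y₂) := by
          by_contra hpe
          exact Finset.disjoint_left.1 (hφdisj _ _ _ _ hpe)
            (Finset.mem_image.2 ⟨t₁, m₁, hts₁⟩) (Finset.mem_image.2 ⟨t₂, m₂, hts₂⟩)
        have hbx : blkIdx x₁ = blkIdx x₂ := congrArg Prod.fst hpe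
        have hby : blkIdx y₁ = blkIdx y₂ := congrArg Prod.snd hpe
        have hte : t₁ = t₂ := hinj (blkIdx x₁) (blkIdx y₁) m₁ m₂ (by
          rw [hts₁]
          rw [hbx, hby, hts₂])
        have hbp : ((inIdx x₁, inIdx y₁) : Fin n × Fin n) ≠ (inIdx x₂, inIdx y₂) := by
          intro he
          apply hne
          have hx : x₁ = x₂ := fin_eq_of_blk_in hbx (congrArg Prod.fst he)
          have hy : y₁ = y₂ := fin_eq_of_blk_in hby (congrArg Prod.snd he)
          rw [hx, hy]
        obtain ⟨e1, e2⟩ := hstar.2.2.2 _ _ _ _ t₁ hbp ht₁ (by rw [ht₂, hte])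
        have n1 : blkIdx x₁ ≠ blkIdx y₂ := fun h => d1 (h.trans hby.symm)
        have n2 : blkIdx x₂ ≠ blkIdx y₁ := fun h => d1 (hbx.trans h)
        exact ⟨by rw [if_neg n1, e1]; rfl, by rw [if_neg n2, e2]; rfl⟩
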